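/- arXiv:1808.09022 — 8 statements merged into one kernel-verified Lean document; each statement's English description precedes it below -/
import Mathlib

section
/- Let a, b, d be real numbers with d > 1, and let k : ℝ → ℝ be the piecewise-linear Chua characteristic k(φ) = bφ + ((a−b)/2)(|φ+1| − |φ−1|). Then the function S(c₁, c₂) = ∫_{−d}^{d} (k(φ) − c₁φ³ − c₂φ)² dφ attains its unique global minimum at c₁ = −35(a−b)(d²−1)²/(16d⁷) and c₂ = (a−b)(21 − 50d² + 45d⁴)/(16d⁵) + b. -/
open MeasureTheory intervalIntegral

/-- Integral of `(|φ+1| - |φ-1|) * φ` over `[-d, d]` for `d ≥ 1`. -/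
lemma integral_sat_mul_pow1 (d : ℝ) (hd : 1 ≤ d) :
    ∫ φ in (-d)..d, (|φ + 1| - |φ - 1|) * φ = 2 * d ^ 2 - 2 / 3 := by
  have hc : ∀ l r : ℝ, IntervalIntegrable (fun φ => (|φ + 1| - |φ - 1|) * φ) volume l r := by
    intro l r; exact (Continuous.intervalIntegrable (by fun_prop)) l r
  have split : ∫ φ in (-d)..d, (|φ + 1| - |φ - 1|) * φ
      = (∫ φ in (-d)..(-1:ℝ), (|φ + 1| - |φ - 1|) * φ)
        + ((∫ φ in (-1:ℝ)..(1:ℝ), (|φ + 1| - |φ - 1|) * φ)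
        + (∫ φ in (1:ℝ)..d, (|φ + 1| - |φ - 1|) * φ)) := by
    rw [integral_add_adjacent_intervals (hc _ _) (hc _ _),
        integral_add_adjacent_intervals (hc _ _) (hc _ _)]
  have h1 : ∫ φ in (-d)..(-1:ℝ), (|φ + 1| - |φ - 1|) * φ = d ^ 2 - 1 := by
    have e : ∫ φ in (-d)..(-1:ℝ), (|φ + 1| - |φ - 1|) * φ
        = ∫ φ in (-d)..(-1:ℝ), (-2 : ℝ) * φ := by
      apply integral_congr
      intro φ hφ
      rw [Set.uIcc_of_le (by linarith)] at hφ
      obtain ⟨_, h2⟩ := hφ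
      simp only [abs_of_nonpos (show φ + 1 ≤ 0 by linarith),
        abs_of_nonpos (show φ - 1 ≤ 0 by linarith)]
      ring
    rw [e, intervalIntegral.integral_const_mul, integral_id]; ring
  have h2 : ∫ φ in (-1:ℝ)..(1:ℝ), (|φ + 1| - |φ - 1|) * φ = 4 / 3 := by
    have e : ∫ φ in (-1:ℝ)..(1:ℝ), (|φ + 1| - |φ - 1|) * φ
        = ∫ φ in (-1:ℝ)..(1:ℝ), 2 * φ ^ 2 := by
      apply integral_congr
      intro φ hφ
      rw [Set.uIcc_of_le (by norm_num)] at hφ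
      obtain ⟨ha, hb⟩ := hφ
      simp only [abs_of_nonneg (show (0:ℝ) ≤ φ + 1 by linarith),
        abs_of_nonpos (show φ - 1 ≤ 0 by linarith)]
      ring
    rw [e, intervalIntegral.integral_const_mul, integral_pow]; norm_num
  have h3 : ∫ φ in (1:ℝ)..d, (|φ + 1| - |φ - 1|) * φ = d ^ 2 - 1 := by
    have e : ∫ φ in (1:ℝ)..d, (|φ + 1| - |φ - 1|) * φ
        = ∫ φ in (1:ℝ)..d, (2 : ℝ) * φ := by
      apply integral_congr
      intro φ hφ
      rw [Set.uIcc_of_le (by linarith)] at hφ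
      obtain ⟨ha, _⟩ := hφ
      simp only [abs_of_nonneg (show (0:ℝ) ≤ φ + 1 by linarith),
        abs_of_nonneg (show (0:ℝ) ≤ φ - 1 by linarith)]
      ring
    rw [e, intervalIntegral.integral_const_mul, integral_id]; ring
  rw [split, h1, h2, h3]; ring

/-- Integral of `(|φ+1| - |φ-1|) * φ³` over `[-d, d]` for `d ≥ 1`. -/
lemma integral_sat_mul_pow3 (d : ℝ) (hd : 1 ≤ d) :
    ∫ φ in (-d)..d, (|φ + 1| - |φ - 1|) * φ ^ 3 = d ^ 4 - 1 / 5 := by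
  have hc : ∀ l r : ℝ, IntervalIntegrable (fun φ => (|φ + 1| - |φ - 1|) * φ ^ 3) volume l r := by
    intro l r; exact (Continuous.intervalIntegrable (by fun_prop)) l r
  have split : ∫ φ in (-d)..d, (|φ + 1| - |φ - 1|) * φ ^ 3
      = (∫ φ in (-d)..(-1:ℝ), (|φ + 1| - |φ - 1|) * φ ^ 3)
        + ((∫ φ in (-1:ℝ)..(1:ℝ), (|φ + 1| - |φ - 1|) * φ ^ 3)
        + (∫ φ in (1:ℝ)..d, (|φ + 1| - |φ - 1|) * φ ^ 3)) := by
    rw [integral_add_adjacent_intervals (hc _ _) (hc _ _),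
        integral_add_adjacent_intervals (hc _ _) (hc _ _)]
  have h1 : ∫ φ in (-d)..(-1:ℝ), (|φ + 1| - |φ - 1|) * φ ^ 3 = (d ^ 4 - 1) / 2 := by
    have e : ∫ φ in (-d)..(-1:ℝ), (|φ + 1| - |φ - 1|) * φ ^ 3
        = ∫ φ in (-d)..(-1:ℝ), (-2 : ℝ) * φ ^ 3 := by
      apply integral_congr
      intro φ hφ
      rw [Set.uIcc_of_le (by linarith)] at hφ
      obtain ⟨_, h2⟩ := hφ
      simp only [abs_of_nonpos (show φ + 1 ≤ 0 by linarith),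
        abs_of_nonpos (show φ - 1 ≤ 0 by linarith)]
      ring
    rw [e, intervalIntegral.integral_const_mul, integral_pow]; ring
  have h2 : ∫ φ in (-1:ℝ)..(1:ℝ), (|φ + 1| - |φ - 1|) * φ ^ 3 = 4 / 5 := by
    have e : ∫ φ in (-1:ℝ)..(1:ℝ), (|φ + 1| - |φ - 1|) * φ ^ 3
        = ∫ φ in (-1:ℝ)..(1:ℝ), 2 * φ ^ 4 := by
      apply integral_congr
      intro φ hφ
      rw [Set.uIcc_of_le (by norm_num)] at hφ
      obtain ⟨ha, hb⟩ := hφ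
      simp only [abs_of_nonneg (show (0:ℝ) ≤ φ + 1 by linarith),
        abs_of_nonpos (show φ - 1 ≤ 0 by linarith)]
      ring
    rw [e, intervalIntegral.integral_const_mul, integral_pow]; norm_num
  have h3 : ∫ φ in (1:ℝ)..d, (|φ + 1| - |φ - 1|) * φ ^ 3 = (d ^ 4 - 1) / 2 := by
    have e : ∫ φ in (1:ℝ)..d, (|φ + 1| - |φ - 1|) * φ ^ 3
        = ∫ φ in (1:ℝ)..d, (2 : ℝ) * φ ^ 3 := by
      apply integral_congr
      intro φ hφ
      rw [Set.uIcc_of_le (by linarith)] at hφ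
      obtain ⟨ha, _⟩ := hφ
      simp only [abs_of_nonneg (show (0:ℝ) ≤ φ + 1 by linarith),
        abs_of_nonneg (show (0:ℝ) ≤ φ - 1 by linarith)]
      ring
    rw [e, intervalIntegral.integral_const_mul, integral_pow]; ring
  rw [split, h1, h2, h3]; ring

/-- Positive definiteness of the Gram form of `φ³, φ` on `[-d, d]`. -/
lemma gram_form_pos (d u v : ℝ) (hd0 : 0 < d) (huv : u ≠ 0 ∨ v ≠ 0) :
    0 < u ^ 2 * (2 * d ^ 7 / 7) + 2 * u * v * (2 * d ^ 5 / 5) + v ^ 2 * (2 * d ^ 3 / 3) := by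
  rcases eq_or_ne v 0 with hv0 | hv0
  · have hu0 : u ≠ 0 := by
      rcases huv with h | h
      · exact h
      · exact absurd hv0 h
    rw [hv0]
    have : 0 < u ^ 2 * (2 * d ^ 7 / 7) := by positivity
    nlinarith
  · have hv2 : 0 < v ^ 2 := by positivity
    nlinarith [mul_nonneg (pow_pos hd0 3).le (sq_nonneg (5 * d ^ 2 * u + 7 * v)),
      mul_pos (pow_pos hd0 3) hv2]

/-- The piecewise-linear Chua characteristic `k(φ) = bφ + ((a-b)/2)(|φ+1| - |φ-1|)`. -/
noncomputable def chuaPL (a b φ : ℝ) : ℝ :=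
  b * φ + (a - b) / 2 * (|φ + 1| - |φ - 1|)

/-- The square error `S(c₁, c₂) = ∫_{-d}^{d} (k(φ) - c₁φ³ - c₂φ)² dφ` between the
piecewise-linear characteristic and the cubic `c₁φ³ + c₂φ`. -/
noncomputable def squareError (a b d c₁ c₂ : ℝ) : ℝ :=
  ∫ φ in (-d)..d, (chuaPL a b φ - (c₁ * φ ^ 3 + c₂ * φ)) ^ 2

/-- For `d > 1`, the square error `S` attains its unique global minimum at
`c₁ = -35(a-b)(d²-1)²/(16 d⁷)` and `c₂ = (a-b)(21 - 50d² + 45d⁴)/(16 d⁵) + b`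
(least squares approximation of the Chua characteristic by a cubic). -/
theorem squareError_unique_global_min (a b d : ℝ) (hd : d > 1) :
    ∀ c₁ c₂ : ℝ,
      (c₁, c₂) ≠ (-35 * (a - b) * (d ^ 2 - 1) ^ 2 / (16 * d ^ 7),
                  (a - b) * (21 - 50 * d ^ 2 + 45 * d ^ 4) / (16 * d ^ 5) + b) →
      squareError a b d (-35 * (a - b) * (d ^ 2 - 1) ^ 2 / (16 * d ^ 7))
          ((a - b) * (21 - 50 * d ^ 2 + 45 * d ^ 4) / (16 * d ^ 5) + b)
        < squareError a b d c₁ c₂ := by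
  intro c₁ c₂ hne
  have hd0 : (0:ℝ) < d := by linarith
  have hd1 : (1:ℝ) ≤ d := hd.le
  have hdne : d ≠ 0 := ne_of_gt hd0
  set C₁ : ℝ := -35 * (a - b) * (d ^ 2 - 1) ^ 2 / (16 * d ^ 7) with hC₁
  set C₂ : ℝ := (a - b) * (21 - 50 * d ^ 2 + 45 * d ^ 4) / (16 * d ^ 5) + b with hC₂
  set u : ℝ := C₁ - c₁ with hu
  set v : ℝ := C₂ - c₂ with hv
  -- continuity facts
  have hk : Continuous (chuaPL a b) := by unfold chuaPL; fun_prop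
  have hg : Continuous (fun φ : ℝ => chuaPL a b φ - (C₁ * φ ^ 3 + C₂ * φ)) :=
    hk.sub (by fun_prop)
  -- orthogonality: the normal equations hold at (C₁, C₂)
  have orth1 : ∫ φ in (-d)..d, (chuaPL a b φ - (C₁ * φ ^ 3 + C₂ * φ)) * φ = 0 := by
    have e : Set.EqOn (fun φ : ℝ => (chuaPL a b φ - (C₁ * φ ^ 3 + C₂ * φ)) * φ)
        (fun φ : ℝ => ((b - C₂) * φ ^ 2 - C₁ * φ ^ 4)
          + (a - b) / 2 * ((|φ + 1| - |φ - 1|) * φ)) (Set.uIcc (-d) d) := by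
      intro φ _; simp only [chuaPL]; ring
    rw [integral_congr e, integral_add
        ((Continuous.intervalIntegrable (by fun_prop)) _ _)
        ((Continuous.intervalIntegrable (by fun_prop)) _ _),
      integral_sub ((Continuous.intervalIntegrable (by fun_prop)) _ _)
        ((Continuous.intervalIntegrable (by fun_prop)) _ _),
      intervalIntegral.integral_const_mul, intervalIntegral.integral_const_mul, intervalIntegral.integral_const_mul,
      integral_pow, integral_pow, integral_sat_mul_pow1 d hd1]
    rw [hC₁, hC₂]
    have h7 : d ^ 7 ≠ 0 := pow_ne_zero _ hdne
    have h5 : d ^ 5 ≠ 0 := pow_ne_zero _ hdne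
    field_simp
    ring
  have orth3 : ∫ φ in (-d)..d, (chuaPL a b φ - (C₁ * φ ^ 3 + C₂ * φ)) * φ ^ 3 = 0 := by
    have e : Set.EqOn (fun φ : ℝ => (chuaPL a b φ - (C₁ * φ ^ 3 + C₂ * φ)) * φ ^ 3)
        (fun φ : ℝ => ((b - C₂) * φ ^ 4 - C₁ * φ ^ 6)
          + (a - b) / 2 * ((|φ + 1| - |φ - 1|) * φ ^ 3)) (Set.uIcc (-d) d) := by
      intro φ _; simp only [chuaPL]; ring
    rw [integral_congr e, integral_add
        ((Continuous.intervalIntegrable (by fun_prop)) _ _)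
        ((Continuous.intervalIntegrable (by fun_prop)) _ _),
      integral_sub ((Continuous.intervalIntegrable (by fun_prop)) _ _)
        ((Continuous.intervalIntegrable (by fun_prop)) _ _),
      intervalIntegral.integral_const_mul, intervalIntegral.integral_const_mul, intervalIntegral.integral_const_mul,
      integral_pow, integral_pow, integral_sat_mul_pow3 d hd1]
    rw [hC₁, hC₂]
    have h7 : d ^ 7 ≠ 0 := pow_ne_zero _ hdne
    have h5 : d ^ 5 ≠ 0 := pow_ne_zero _ hdne
    field_simp
    ring
  -- the quadratic remainder term
  have quad : ∫ φ in (-d)..d, (u * φ ^ 3 + v * φ) ^ 2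
      = u ^ 2 * (2 * d ^ 7 / 7) + 2 * u * v * (2 * d ^ 5 / 5) + v ^ 2 * (2 * d ^ 3 / 3) := by
    have e : Set.EqOn (fun φ : ℝ => (u * φ ^ 3 + v * φ) ^ 2)
        (fun φ : ℝ => (u ^ 2 * φ ^ 6 + (2 * u * v) * φ ^ 4) + v ^ 2 * φ ^ 2)
        (Set.uIcc (-d) d) := by
      intro φ _; ring
    rw [integral_congr e, integral_add
        ((Continuous.intervalIntegrable (by fun_prop)) _ _)
        ((Continuous.intervalIntegrable (by fun_prop)) _ _),
      integral_add ((Continuous.intervalIntegrable (by fun_prop)) _ _)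
        ((Continuous.intervalIntegrable (by fun_prop)) _ _),
      intervalIntegral.integral_const_mul, intervalIntegral.integral_const_mul, intervalIntegral.integral_const_mul,
      integral_pow, integral_pow, integral_pow]
    norm_num
    ring
  -- expand the square error around the optimal coefficients
  have expand : squareError a b d c₁ c₂
      = squareError a b d C₁ C₂
        + ((2 * u) * (∫ φ in (-d)..d, (chuaPL a b φ - (C₁ * φ ^ 3 + C₂ * φ)) * φ ^ 3)
          + ((2 * v) * (∫ φ in (-d)..d, (chuaPL a b φ - (C₁ * φ ^ 3 + C₂ * φ)) * φ)
            + ∫ φ in (-d)..d, (u * φ ^ 3 + v * φ) ^ 2)) := by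
    unfold squareError
    have e : Set.EqOn (fun φ : ℝ => (chuaPL a b φ - (c₁ * φ ^ 3 + c₂ * φ)) ^ 2)
        (fun φ : ℝ => (chuaPL a b φ - (C₁ * φ ^ 3 + C₂ * φ)) ^ 2
          + ((2 * u) * ((chuaPL a b φ - (C₁ * φ ^ 3 + C₂ * φ)) * φ ^ 3)
            + ((2 * v) * ((chuaPL a b φ - (C₁ * φ ^ 3 + C₂ * φ)) * φ)
              + (u * φ ^ 3 + v * φ) ^ 2))) (Set.uIcc (-d) d) := by
      intro φ _
      simp only [hu, hv]
      ring
    rw [integral_congr e,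
      integral_add ((Continuous.intervalIntegrable (show
          Continuous fun φ : ℝ => (chuaPL a b φ - (C₁ * φ ^ 3 + C₂ * φ)) ^ 2 from hg.pow 2)) _ _)
        ((Continuous.intervalIntegrable (by fun_prop)) _ _),
      integral_add ((Continuous.intervalIntegrable (by fun_prop)) _ _)
        ((Continuous.intervalIntegrable (by fun_prop)) _ _),
      integral_add ((Continuous.intervalIntegrable (by fun_prop)) _ _)
        ((Continuous.intervalIntegrable (by fun_prop)) _ _),
      intervalIntegral.integral_const_mul, intervalIntegral.integral_const_mul]
  rw [expand, orth1, orth3, quad]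
  have huv : u ≠ 0 ∨ v ≠ 0 := by
    by_contra hcon
    push_neg at hcon
    obtain ⟨h1, h2⟩ := hcon
    apply hne
    rw [Prod.mk.injEq]
    constructor
    · rw [hu] at h1; linarith
    · rw [hv] at h2; linarith
  have hP := gram_form_pos d u v hd0 huv
  linarith
end

section
/- Let c₁ > 0, c₂ < 0 and β, γ be real parameters, and consider the third-order memristor system with f₁(x₁,x₂,y₁) = y₁ − x₂, f₂(x₁,x₂,y₁) = βx₁ + γx₂ and g₁(x₁,x₂,y₁) = −x₁ − (c₁y₁³ + c₂y₁). Then the set of pseudo singular points, i.e., the set of (x₁,x₂,y₁) ∈ ℝ³ satisfying g₁ = 0, ∂g₁/∂y₁ = 0 and (∂g₁/∂x₁)·f₁ + (∂g₁/∂x₂)·f₂ = 0, consists exactly of the two points (x₁, x₂, y₁) = (±(2c₂/3)·s, ∓s, ∓s), where s = √(−c₂/(3c₁)). -/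
/-- Slow vector field component `f₁(x₁,x₂,y₁) = y₁ - x₂` of the third-order memristor
canonical Chua circuit. -/
def memf₁ (x₁ x₂ y₁ : ℝ) : ℝ := y₁ - x₂

/-- Slow vector field component `f₂(x₁,x₂,y₁) = βx₁ + γx₂`. -/
def memf₂ (β γ x₁ x₂ y₁ : ℝ) : ℝ := β * x₁ + γ * x₂

/-- Fast component `g₁(x₁,x₂,y₁) = -x₁ - (c₁y₁³ + c₂y₁)`. -/
def memg₁ (c₁ c₂ x₁ x₂ y₁ : ℝ) : ℝ := -x₁ - (c₁ * y₁ ^ 3 + c₂ * y₁)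

lemma memg₁_deriv_y (c₁ c₂ x₁ x₂ z : ℝ) :
    deriv (fun y₁ => memg₁ c₁ c₂ x₁ x₂ y₁) z = -(3 * c₁ * z ^ 2 + c₂) := by
  have h : HasDerivAt (fun y₁ : ℝ => memg₁ c₁ c₂ x₁ x₂ y₁) (-(3 * c₁ * z ^ 2 + c₂)) z := by
    unfold memg₁
    have h1 := ((hasDerivAt_pow 3 z).const_mul c₁).add ((hasDerivAt_id z).const_mul c₂)
    have h2 := h1.const_sub (-x₁)
    exact h2.congr_deriv (by simp; ring)
  exact h.deriv

lemma memg₁_deriv_x1 (c₁ c₂ x₁ x₂ z : ℝ) :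
    deriv (fun t => memg₁ c₁ c₂ t x₂ z) x₁ = -1 := by
  have h : HasDerivAt (fun t : ℝ => memg₁ c₁ c₂ t x₂ z) (-1) x₁ := by
    unfold memg₁
    have := ((hasDerivAt_id x₁).neg).sub_const (c₁ * z ^ 3 + c₂ * z)
    simpa using this
  exact h.deriv

lemma memg₁_deriv_x2 (c₁ c₂ x₁ x₂ z : ℝ) :
    deriv (fun t => memg₁ c₁ c₂ x₁ t z) x₂ = 0 := by
  simp [memg₁]

/-- For `c₁ > 0`, `c₂ < 0`, the set of pseudo singular points of the
third-order memristor system, i.e. the solutions of `g₁ = 0`, `∂g₁/∂y₁ = 0` and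
`(∂g₁/∂x₁)f₁ + (∂g₁/∂x₂)f₂ = 0`, consists exactly of the two points
`(±(2c₂/3)s, ∓s, ∓s)` with `s = √(-c₂/(3c₁))`. -/
theorem pseudo_singular_points_third_order (c₁ c₂ β γ : ℝ) (hc₁ : c₁ > 0) (hc₂ : c₂ < 0) :
    {p : ℝ × ℝ × ℝ |
        memg₁ c₁ c₂ p.1 p.2.1 p.2.2 = 0 ∧
        deriv (fun y₁ => memg₁ c₁ c₂ p.1 p.2.1 y₁) p.2.2 = 0 ∧
        deriv (fun x₁ => memg₁ c₁ c₂ x₁ p.2.1 p.2.2) p.1 * memf₁ p.1 p.2.1 p.2.2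
          + deriv (fun x₂ => memg₁ c₁ c₂ p.1 x₂ p.2.2) p.2.1 * memf₂ β γ p.1 p.2.1 p.2.2
          = 0}
    = {(2 * c₂ / 3 * Real.sqrt (-c₂ / (3 * c₁)),
        -Real.sqrt (-c₂ / (3 * c₁)), -Real.sqrt (-c₂ / (3 * c₁))),
       (-(2 * c₂ / 3 * Real.sqrt (-c₂ / (3 * c₁))),
        Real.sqrt (-c₂ / (3 * c₁)), Real.sqrt (-c₂ / (3 * c₁)))} := by
  set s := Real.sqrt (-c₂ / (3 * c₁)) with hs
  have h3c : (0:ℝ) < 3 * c₁ := by linarith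
  have hnn : (0:ℝ) ≤ -c₂ / (3 * c₁) := div_nonneg (by linarith) (by linarith)
  have hss : s ^ 2 = -c₂ / (3 * c₁) := Real.sq_sqrt hnn
  have hcp : c₁ * s ^ 2 = -c₂ / 3 := by
    rw [hss]; field_simp
  ext ⟨x, y, z⟩
  simp only [Set.mem_setOf_eq, memg₁_deriv_y, memg₁_deriv_x1, memg₁_deriv_x2,
    Set.mem_insert_iff, Set.mem_singleton_iff, Prod.mk.injEq]
  simp only [memg₁, memf₁, memf₂]
  constructor
  · rintro ⟨h1, h2, h3⟩
    have hyz : y = z := by linarith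
    have hz2 : z ^ 2 = s ^ 2 := by
      rw [hss]
      field_simp
      nlinarith [h2]
    have hc : 3 * c₁ * z ^ 2 = -c₂ := by nlinarith [hz2, hcp]
    have hc3 : c₁ * z ^ 3 = -c₂ * z / 3 := by linear_combination (z / 3) * hc
    have hx : x = -(2 * c₂ / 3) * z := by linarith
    rcases sq_eq_sq_iff_eq_or_eq_neg.mp hz2 with hzs | hzs
    · right
      exact ⟨by rw [hx, hzs]; ring, hyz.trans hzs, hzs⟩
    · left
      exact ⟨by rw [hx, hzs]; ring, hyz.trans hzs, hzs⟩
  · rintro (⟨hx, hy, hz⟩ | ⟨hx, hy, hz⟩) <;> subst hx <;> subst hy <;> subst hz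
    · exact ⟨by linear_combination s * hcp, by linear_combination (-3) * hcp, by ring⟩
    · exact ⟨by linear_combination (-s) * hcp, by linear_combination (-3) * hcp, by ring⟩
end

section
/- Let β, γ, c₂ be real numbers with c₂ < 0, and let M be the 3×3 real matrix with rows (0,0,0), (0, 0, −2γc₂ + (4/3)βc₂²), (0, 1, −1). Then the characteristic polynomial of M equals λ(λ² + λ + q) with q = (2/3)c₂(3γ − 2βc₂), and M has two nonzero real eigenvalues of opposite sign (i.e., the pseudo singular point is of saddle type) if and only if γ > 2βc₂/3. -/
open Matrix

/-- For the Jacobian `M` of the normalized slow dynamics of the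
third-order memristor Chua circuit at its pseudo singular points (rows
`(0,0,0)`, `(0,0,-2γc₂ + (4/3)βc₂²)`, `(0,1,-1)`), the characteristic polynomial is
`λ(λ² + λ + q)` with `q = (2/3)c₂(3γ - 2βc₂)`, and `M` has two nonzero real eigenvalues
of opposite sign (saddle type) if and only if `γ > 2βc₂/3`. -/
theorem third_order_pseudo_singular_saddle (β γ c₂ : ℝ) (hc₂ : c₂ < 0)
    (M : Matrix (Fin 3) (Fin 3) ℝ)
    (hM : M = !![0, 0, 0;
                 0, 0, -2 * γ * c₂ + 4 / 3 * β * c₂ ^ 2;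
                 0, 1, -1]) :
    (∀ t : ℝ, Matrix.det (t • (1 : Matrix (Fin 3) (Fin 3) ℝ) - M)
        = t * (t ^ 2 + t + 2 / 3 * c₂ * (3 * γ - 2 * β * c₂)))
    ∧ ((∃ l₁ l₂ : ℝ, l₁ * l₂ < 0 ∧
        ∀ t : ℝ, Matrix.det (t • (1 : Matrix (Fin 3) (Fin 3) ℝ) - M)
          = t * (t - l₁) * (t - l₂))
      ↔ γ > 2 * β * c₂ / 3) := by
  subst hM
  set q : ℝ := 2 / 3 * c₂ * (3 * γ - 2 * β * c₂) with hq
  have hdet : ∀ t : ℝ, Matrix.det (t • (1 : Matrix (Fin 3) (Fin 3) ℝ)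
      - !![0, 0, 0; 0, 0, -2 * γ * c₂ + 4 / 3 * β * c₂ ^ 2; 0, 1, -1])
      = t * (t ^ 2 + t + q) := by
    intro t
    simp [Matrix.det_fin_three, Matrix.smul_apply, Matrix.one_apply, hq]
    ring
  refine ⟨hdet, ?_⟩
  constructor
  · rintro ⟨l₁, l₂, hneg, hfac⟩
    -- derive l₁, l₂ roots of t^2 + t + q
    have h₁ : l₁ ≠ 0 := by rintro rfl; simp at hneg
    have h₂ : l₂ ≠ 0 := by rintro rfl; simp at hneg
    have e₁ : l₁ ^ 2 + l₁ + q = 0 := by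
      have := (hfac l₁).symm.trans (hdet l₁)
      simp at this
      rcases this with h | h
      · exact absurd h h₁
      · exact h
    have e₂ : l₂ ^ 2 + l₂ + q = 0 := by
      have := (hfac l₂).symm.trans (hdet l₂)
      have : l₂ * (l₂ ^ 2 + l₂ + q) = 0 := by linarith [hdet l₂, hfac l₂]
      rcases mul_eq_zero.mp this with h | h
      · exact absurd h h₂
      · exact h
    have hne : l₁ ≠ l₂ := by
      rintro rfl
      nlinarith [sq_nonneg l₁]
    have hsum : l₁ + l₂ = -1 := by
      have : (l₁ - l₂) * (l₁ + l₂ + 1) = 0 := by nlinarith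
      rcases mul_eq_zero.mp this with h | h
      · exact absurd (by linarith) hne
      · linarith
    have hqv : q = l₁ * l₂ := by nlinarith
    have hqneg : q < 0 := hqv ▸ hneg
    rw [hq] at hqneg
    nlinarith
  · intro hγ
    have hqneg : q < 0 := by rw [hq]; nlinarith
    have hd : (0:ℝ) < 1 - 4 * q := by linarith
    set s := Real.sqrt (1 - 4 * q) with hs
    have hs2 : s ^ 2 = 1 - 4 * q := Real.sq_sqrt hd.le
    refine ⟨(-1 + s) / 2, (-1 - s) / 2, ?_, ?_⟩
    · have : (-1 + s) / 2 * ((-1 - s) / 2) = q := by nlinarith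
      rw [this]; exact hqneg
    · intro t
      rw [hdet t]
      linear_combination (t / 4) * hs2
end

section
/- Let c₁ > 0, c₂ < 0, β₁ ≠ 0, and α₂, β₂ be real parameters, and consider the fourth-order memristor system with f₁ = β₁(x₃ − x₁ − y₁), f₂ = β₂x₃, f₃ = −x₂ − α₂x₃ − x₁ and g₁ = x₁ − (c₁y₁³ + c₂y₁). Then the set of (x₁,x₂,x₃,y₁) ∈ ℝ⁴ satisfying g₁ = 0, ∂g₁/∂y₁ = 0 and Σᵢ(∂g₁/∂xᵢ)·fᵢ = 0 (the pseudo singular manifold) consists exactly of the two lines { ((2c₂/3)·σs, x₂, (2c₂/3 + 1)·σs, σs) : x₂ ∈ ℝ } for σ ∈ {+1, −1}, where s = √(−c₂/(3c₁)). -/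
/-- `f₁ = β₁(x₃ - x₁ - y₁)` of the fourth-order memristor circuit. -/
def mem4f₁ (β₁ x₁ x₂ x₃ y₁ : ℝ) : ℝ := β₁ * (x₃ - x₁ - y₁)

/-- `f₂ = β₂ x₃`. -/
def mem4f₂ (β₂ x₁ x₂ x₃ y₁ : ℝ) : ℝ := β₂ * x₃

/-- `f₃ = -x₂ - α₂x₃ - x₁`. -/
def mem4f₃ (α₂ x₁ x₂ x₃ y₁ : ℝ) : ℝ := -x₂ - α₂ * x₃ - x₁

/-- `g₁ = x₁ - (c₁y₁³ + c₂y₁)`. -/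
def mem4g₁ (c₁ c₂ x₁ x₂ x₃ y₁ : ℝ) : ℝ := x₁ - (c₁ * y₁ ^ 3 + c₂ * y₁)

lemma mem4_deriv_y (c₁ c₂ x₁ y : ℝ) :
    deriv (fun y₁ : ℝ => x₁ - (c₁ * y₁ ^ 3 + c₂ * y₁)) y = -(3 * c₁ * y ^ 2 + c₂) := by
  have h2 := (hasDerivAt_const y x₁).sub
    (((hasDerivAt_pow 3 y).const_mul c₁).add ((hasDerivAt_id y).const_mul c₂))
  have h : HasDerivAt (fun y₁ : ℝ => x₁ - (c₁ * y₁ ^ 3 + c₂ * y₁))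
      (-(3 * c₁ * y ^ 2 + c₂)) y := by
    refine h2.congr_deriv ?_
    push_cast
    ring
  exact h.deriv

lemma mem4_deriv_x (c x : ℝ) : deriv (fun t : ℝ => t - c) x = 1 := by
  have h : HasDerivAt (fun t : ℝ => t - c) 1 x := (hasDerivAt_id x).sub_const c
  exact h.deriv

/-- For `c₁ > 0`, `c₂ < 0`, `β₁ ≠ 0`, the pseudo singular manifold of the
fourth-order memristor system, i.e. the set of solutions of `g₁ = 0`, `∂g₁/∂y₁ = 0`,
`Σᵢ (∂g₁/∂xᵢ) fᵢ = 0`, consists exactly of the two lines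
`((2c₂/3)σs, x₂, (2c₂/3 + 1)σs, σs)`, `x₂ ∈ ℝ`, `σ = ±1`, where `s = √(-c₂/(3c₁))`. -/
theorem pseudo_singular_manifold_fourth_order
    (c₁ c₂ β₁ α₂ β₂ : ℝ) (hc₁ : c₁ > 0) (hc₂ : c₂ < 0) (hβ₁ : β₁ ≠ 0) :
    {p : ℝ × ℝ × ℝ × ℝ |
        mem4g₁ c₁ c₂ p.1 p.2.1 p.2.2.1 p.2.2.2 = 0 ∧
        deriv (fun y₁ => mem4g₁ c₁ c₂ p.1 p.2.1 p.2.2.1 y₁) p.2.2.2 = 0 ∧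
        deriv (fun x₁ => mem4g₁ c₁ c₂ x₁ p.2.1 p.2.2.1 p.2.2.2) p.1
            * mem4f₁ β₁ p.1 p.2.1 p.2.2.1 p.2.2.2
          + deriv (fun x₂ => mem4g₁ c₁ c₂ p.1 x₂ p.2.2.1 p.2.2.2) p.2.1
            * mem4f₂ β₂ p.1 p.2.1 p.2.2.1 p.2.2.2
          + deriv (fun x₃ => mem4g₁ c₁ c₂ p.1 p.2.1 x₃ p.2.2.2) p.2.2.1
            * mem4f₃ α₂ p.1 p.2.1 p.2.2.1 p.2.2.2
          = 0}
    = {p : ℝ × ℝ × ℝ × ℝ | ∃ x₂ : ℝ,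
         p = ((2 * c₂ / 3) * Real.sqrt (-c₂ / (3 * c₁)), x₂,
              (2 * c₂ / 3 + 1) * Real.sqrt (-c₂ / (3 * c₁)),
              Real.sqrt (-c₂ / (3 * c₁)))
         ∨ p = ((2 * c₂ / 3) * (-Real.sqrt (-c₂ / (3 * c₁))), x₂,
                (2 * c₂ / 3 + 1) * (-Real.sqrt (-c₂ / (3 * c₁))),
                -Real.sqrt (-c₂ / (3 * c₁)))} := by
  set s := Real.sqrt (-c₂ / (3 * c₁)) with hs
  have harg : (0:ℝ) ≤ -c₂ / (3 * c₁) := div_nonneg (by linarith) (by linarith)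
  have hs2 : s ^ 2 = -c₂ / (3 * c₁) := Real.sq_sqrt harg
  have hc2 : c₂ = -(3 * c₁) * s ^ 2 := by rw [hs2]; field_simp
  ext ⟨x₁, x₂, x₃, y₁⟩
  simp only [Set.mem_setOf_eq, mem4g₁, mem4f₁, mem4f₂, mem4f₃, mem4_deriv_y, mem4_deriv_x,
    deriv_const', zero_mul, add_zero, one_mul]
  constructor
  · rintro ⟨hg, hd, hf⟩
    have hsq : y₁ ^ 2 = s ^ 2 := by
      rw [hs2]
      field_simp
      nlinarith [hd]
    have hy : y₁ = s ∨ y₁ = -s := sq_eq_sq_iff_eq_or_eq_neg.mp hsq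
    have hy2 : c₁ * y₁ ^ 2 = -c₂ / 3 := by
      rw [hsq, hs2]; field_simp
    have hx₁ : x₁ = (2 * c₂ / 3) * y₁ := by
      have h1 : x₁ = c₁ * y₁ ^ 3 + c₂ * y₁ := by linarith
      have h2 : c₁ * y₁ ^ 3 = (c₁ * y₁ ^ 2) * y₁ := by ring
      rw [h1, h2, hy2]; ring
    have hx₃ : x₃ = x₁ + y₁ := by
      have h3 : β₁ * (x₃ - x₁ - y₁) = 0 := by linarith
      have := (mul_eq_zero.mp h3).resolve_left hβ₁
      linarith
    refine ⟨x₂, ?_⟩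
    rcases hy with hy | hy
    · left; subst hy
      simp only [Prod.mk.injEq]
      exact ⟨hx₁, trivial, by rw [hx₃, hx₁]; ring, trivial⟩
    · right; subst hy
      simp only [Prod.mk.injEq]
      exact ⟨hx₁, trivial, by rw [hx₃, hx₁]; ring, trivial⟩
  · rintro ⟨x₂', h | h⟩ <;>
    · simp only [Prod.mk.injEq] at h
      obtain ⟨h1, h2, h3, h4⟩ := h
      subst h1 h3 h4
      refine ⟨by rw [hc2]; ring, by rw [hc2]; ring, by ring⟩
end

section
/- Let β₁, β₂, c₁, α₂, c₂, x₂, x̃₁, x̃₃, ỹ₁ be real numbers with x̃₁ = c₁ỹ₁³ + c₂ỹ₁, and let M be the 4×4 real matrix with rows (0,0,0,0), (0,0,0, 6β₂c₁x̃₃ỹ₁), (0,0,0, −6c₁(α₂x̃₃ + x₂ + x̃₁)ỹ₁), (−β₁, 0, β₁, −β₁). Then the characteristic polynomial of M equals λ²(λ² + β₁λ + q) with q = 6β₁c₁(α₂x̃₃ + x₂ + x̃₁)ỹ₁; in particular, M has two nonzero real eigenvalues of opposite sign (saddle type) if and only if q < 0. -/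
open Matrix

/-- For the Jacobian `M` of the normalized slow dynamics of the
fourth-order memristor circuit at a point `(x̃₁, x₂, x̃₃, ỹ₁)` of its pseudo singular
manifold (with `x̃₁ = c₁ỹ₁³ + c₂ỹ₁`), the characteristic polynomial equals
`λ²(λ² + β₁λ + q)` with `q = 6β₁c₁(α₂x̃₃ + x₂ + x̃₁)ỹ₁`, and `M` has two nonzero real
eigenvalues of opposite sign (saddle type) if and only if `q < 0`. -/
theorem fourth_order_pseudo_singular_saddle
    (β₁ β₂ c₁ α₂ c₂ x₂ xt₁ xt₃ yt₁ : ℝ)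
    (hx : xt₁ = c₁ * yt₁ ^ 3 + c₂ * yt₁)
    (M : Matrix (Fin 4) (Fin 4) ℝ)
    (hM : M = !![0, 0, 0, 0;
                 0, 0, 0, 6 * β₂ * c₁ * xt₃ * yt₁;
                 0, 0, 0, -(6 * c₁ * (α₂ * xt₃ + x₂ + xt₁) * yt₁);
                 -β₁, 0, β₁, -β₁]) :
    (∀ t : ℝ, Matrix.det (t • (1 : Matrix (Fin 4) (Fin 4) ℝ) - M)
        = t ^ 2 * (t ^ 2 + β₁ * t + 6 * β₁ * c₁ * (α₂ * xt₃ + x₂ + xt₁) * yt₁))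
    ∧ ((∃ l₁ l₂ : ℝ, l₁ * l₂ < 0 ∧
          ∀ t : ℝ, Matrix.det (t • (1 : Matrix (Fin 4) (Fin 4) ℝ) - M)
            = t ^ 2 * (t - l₁) * (t - l₂))
        ↔ 6 * β₁ * c₁ * (α₂ * xt₃ + x₂ + xt₁) * yt₁ < 0) := by
  set q : ℝ := 6 * β₁ * c₁ * (α₂ * xt₃ + x₂ + xt₁) * yt₁ with hq
  have hdet : ∀ t : ℝ, Matrix.det (t • (1 : Matrix (Fin 4) (Fin 4) ℝ) - M)
      = t ^ 2 * (t ^ 2 + β₁ * t + q) := by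
    intro t
    subst hM
    have hA : t • (1 : Matrix (Fin 4) (Fin 4) ℝ) - !![0, 0, 0, 0;
                 0, 0, 0, 6 * β₂ * c₁ * xt₃ * yt₁;
                 0, 0, 0, -(6 * c₁ * (α₂ * xt₃ + x₂ + xt₁) * yt₁);
                 -β₁, 0, β₁, -β₁] = !![t, 0, 0, 0;
                 0, t, 0, -(6 * β₂ * c₁ * xt₃ * yt₁);
                 0, 0, t, 6 * c₁ * (α₂ * xt₃ + x₂ + xt₁) * yt₁;
                 β₁, 0, -β₁, t + β₁] := by
      ext i j
      fin_cases i <;> fin_cases j <;> simp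
    rw [hA]
    simp [Matrix.det_succ_row_zero, Fin.sum_univ_succ, Fin.succAbove]
    ring
  refine ⟨hdet, ?_, ?_⟩
  · rintro ⟨l₁, l₂, hl, hfac⟩
    have h1 := (hdet 1).symm.trans (hfac 1)
    have h2 := (hdet (-1)).symm.trans (hfac (-1))
    have : q = l₁ * l₂ := by nlinarith [h1, h2]
    linarith [this ▸ hl]
  · intro hqneg
    have hD : 0 < β₁ ^ 2 - 4 * q := by nlinarith
    set s := Real.sqrt (β₁ ^ 2 - 4 * q) with hs
    have hs2 : s ^ 2 = β₁ ^ 2 - 4 * q := Real.sq_sqrt hD.le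
    refine ⟨(-β₁ + s) / 2, (-β₁ - s) / 2, ?_, ?_⟩
    · nlinarith
    · intro t
      rw [hdet t]
      linear_combination (t ^ 2 / 4) * hs2
end

section
/- Let β₁ > 0, c₁ > 0 and c₂ be a real number with −3/2 < c₂ < 0, set s = √(−c₂/(3c₁)), and consider the positive-branch pseudo singular point with x₂ = 0, i.e., x̃₁ = (2c₂/3)s, x̃₃ = (2c₂/3 + 1)s, ỹ₁ = s. Then q = 6β₁c₁(α₂x̃₃ + x̃₁)ỹ₁ < 0 (equivalently, the pseudo singular point is of saddle type) if and only if α₂ < −2c₂/(3 + 2c₂). -/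
/-- For `β₁ > 0`, `c₁ > 0`, `-3/2 < c₂ < 0`, `s = √(-c₂/(3c₁))`, on the
positive-branch pseudo singular point with `x₂ = 0` (i.e. `x̃₁ = (2c₂/3)s`,
`x̃₃ = (2c₂/3 + 1)s`, `ỹ₁ = s`): `q = 6β₁c₁(α₂x̃₃ + x̃₁)ỹ₁ < 0` (saddle type) if and only
if `α₂ < -2c₂/(3 + 2c₂)`. -/
theorem fourth_order_saddle_alpha_condition
    (β₁ c₁ c₂ : ℝ) (hβ₁ : β₁ > 0) (hc₁ : c₁ > 0)
    (hc₂ : -3 / 2 < c₂) (hc₂' : c₂ < 0)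
    (s xt₁ xt₃ yt₁ : ℝ)
    (hs : s = Real.sqrt (-c₂ / (3 * c₁)))
    (h1 : xt₁ = (2 * c₂ / 3) * s)
    (h3 : xt₃ = (2 * c₂ / 3 + 1) * s)
    (hy : yt₁ = s) :
    ∀ α₂ : ℝ,
      6 * β₁ * c₁ * (α₂ * xt₃ + xt₁) * yt₁ < 0 ↔ α₂ < -2 * c₂ / (3 + 2 * c₂) := by
  intro α₂
  have hs0 : 0 < s := by
    rw [hs]
    exact Real.sqrt_pos.mpr (div_pos (by linarith) (by linarith))
  rw [h1, h3, hy]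
  have key : 6 * β₁ * c₁ * (α₂ * ((2 * c₂ / 3 + 1) * s) + (2 * c₂ / 3) * s) * s
      = (6 * β₁ * c₁ * s * s) * (α₂ * (2 * c₂ / 3 + 1) + 2 * c₂ / 3) := by ring
  have hpos : 0 < 6 * β₁ * c₁ * s * s := by positivity
  have hden : 0 < 3 + 2 * c₂ := by linarith
  rw [key, lt_div_iff₀ hden]
  constructor
  · intro h
    nlinarith [mul_pos hpos hden]
  · intro h
    have h2 : α₂ * (2 * c₂ / 3 + 1) + 2 * c₂ / 3 < 0 := by nlinarith
    nlinarith
end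

section
/- Let λ₁, a, b be real numbers and consider the monic real cubic polynomial with roots λ₁, a + ib, a − ib, written as a₃λ³ + a₂λ² + a₁λ + a₀ with a₃ = 1. Then the second Routh–Hurwitz determinant satisfies D₂ = a₁a₂ − a₀a₃ = −2a((λ₁ + a)² + b²). In particular, if b ≠ 0, then D₂ = 0 if and only if a = 0, i.e., D₂ vanishes exactly when the real part of the complex-conjugate pair of roots vanishes. -/
/-- For the monic real cubic with roots `λ₁`, `a + ib`, `a - ib`
(written `λ³ + a₂λ² + a₁λ + a₀`, i.e. `a₃ = 1`), the second Routh–Hurwitz determinant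
satisfies `D₂ = a₁a₂ - a₀a₃ = -2a((λ₁ + a)² + b²)`; in particular, if `b ≠ 0` then
`D₂ = 0` iff `a = 0`. -/
theorem routh_hurwitz_cubic (l₁ a b a₂ a₁ a₀ : ℝ)
    (h : ∀ t : ℝ, t ^ 3 + a₂ * t ^ 2 + a₁ * t + a₀
        = (t - l₁) * ((t - a) ^ 2 + b ^ 2)) :
    a₁ * a₂ - a₀ * 1 = -2 * a * ((l₁ + a) ^ 2 + b ^ 2)
    ∧ (b ≠ 0 → (a₁ * a₂ - a₀ * 1 = 0 ↔ a = 0)) := by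
  have h0 := h 0
  have h1 := h 1
  have hm1 := h (-1)
  have ha₀ : a₀ = -l₁ * (a ^ 2 + b ^ 2) := by nlinarith [h0]
  have ha₂ : a₂ = -(l₁ + 2 * a) := by nlinarith [h1, hm1]
  have ha₁ : a₁ = 2 * a * l₁ + a ^ 2 + b ^ 2 := by nlinarith [h1, hm1]
  subst ha₀ ha₂ ha₁
  refine ⟨by ring, fun hb => ?_⟩
  have hpos : (l₁ + a) ^ 2 + b ^ 2 > 0 := by positivity
  constructor
  · intro he
    have he2 : -2 * a * ((l₁ + a) ^ 2 + b ^ 2) = 0 := by linarith [he, (by ring :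
      (2 * a * l₁ + a ^ 2 + b ^ 2) * -(l₁ + 2 * a) - -l₁ * (a ^ 2 + b ^ 2) * 1
        = -2 * a * ((l₁ + a) ^ 2 + b ^ 2))]
    rcases mul_eq_zero.mp he2 with h' | h'
    · linarith
    · exact absurd h' hpos.ne'
  · intro he; subst he; ring
end

section
/- Let λ₁, λ₂, a, b be real numbers and consider the monic real quartic polynomial with roots λ₁, λ₂, a + ib, a − ib, written as a₄λ⁴ + a₃λ³ + a₂λ² + a₁λ + a₀ with a₄ = 1. Then the third Routh–Hurwitz determinant satisfies D₃ = a₁a₂a₃ − a₀a₃² − a₁²a₄ = 2a((λ₁ + a)² + b²)(λ₁ + λ₂)((λ₂ + a)² + b²). In particular, if b ≠ 0 and λ₁ + λ₂ ≠ 0, then D₃ = 0 if and only if a = 0. -/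
/-- For the monic real quartic with roots `λ₁`, `λ₂`, `a + ib`, `a - ib`
(written `λ⁴ + a₃λ³ + a₂λ² + a₁λ + a₀`, i.e. `a₄ = 1`), the third Routh–Hurwitz
determinant satisfies
`D₃ = a₁a₂a₃ - a₀a₃² - a₁²a₄ = 2a((λ₁ + a)² + b²)(λ₁ + λ₂)((λ₂ + a)² + b²)`;
in particular, if `b ≠ 0` and `λ₁ + λ₂ ≠ 0`, then `D₃ = 0` iff `a = 0`. -/
theorem routh_hurwitz_quartic (l₁ l₂ a b a₃ a₂ a₁ a₀ : ℝ)
    (h : ∀ t : ℝ, t ^ 4 + a₃ * t ^ 3 + a₂ * t ^ 2 + a₁ * t + a₀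
        = (t - l₁) * (t - l₂) * ((t - a) ^ 2 + b ^ 2)) :
    a₁ * a₂ * a₃ - a₀ * a₃ ^ 2 - a₁ ^ 2 * 1
      = 2 * a * ((l₁ + a) ^ 2 + b ^ 2) * (l₁ + l₂) * ((l₂ + a) ^ 2 + b ^ 2)
    ∧ (b ≠ 0 → l₁ + l₂ ≠ 0 →
        (a₁ * a₂ * a₃ - a₀ * a₃ ^ 2 - a₁ ^ 2 * 1 = 0 ↔ a = 0)) := by
  have h0 := h 0
  have h1 := h 1
  have hm1 := h (-1)
  have h2 := h 2
  have hm2 := h (-2)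
  have e0 : a₀ = l₁ * l₂ * (a ^ 2 + b ^ 2) := by linear_combination h0
  have e1 : a₁ = -(l₁ + l₂) * (a ^ 2 + b ^ 2) - 2 * a * l₁ * l₂ := by
    linear_combination (2/3 : ℝ) * h1 - (2/3) * hm1 - (1/12) * h2 + (1/12) * hm2
  have e2 : a₂ = l₁ * l₂ + 2 * a * (l₁ + l₂) + a ^ 2 + b ^ 2 := by
    linear_combination (2/3 : ℝ) * h1 + (2/3) * hm1 - (1/24) * h2 - (1/24) * hm2 - (5/4) * h0
  have e3 : a₃ = -(l₁ + l₂) - 2 * a := by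
    linear_combination (-(1/6) : ℝ) * h1 + (1/6) * hm1 + (1/12) * h2 - (1/12) * hm2
  have key : a₁ * a₂ * a₃ - a₀ * a₃ ^ 2 - a₁ ^ 2 * 1
      = 2 * a * ((l₁ + a) ^ 2 + b ^ 2) * (l₁ + l₂) * ((l₂ + a) ^ 2 + b ^ 2) := by
    subst e0 e1 e2 e3; ring
  refine ⟨key, fun hb hs => ?_⟩
  rw [key]
  have p1 : ((l₁ + a) ^ 2 + b ^ 2) ≠ 0 := by positivity
  have p2 : ((l₂ + a) ^ 2 + b ^ 2) ≠ 0 := by positivity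
  constructor
  · intro hz
    have := mul_eq_zero.mp hz
    rcases this with h' | h'
    · rcases mul_eq_zero.mp h' with h'' | h''
      · rcases mul_eq_zero.mp h'' with h3 | h3
        · rcases mul_eq_zero.mp h3 with h4 | h4
          · norm_num at h4
          · exact h4
        · exact absurd h3 p1
      · exact absurd h'' hs
    · exact absurd h' p2
  · intro ha; rw [ha]; ring
end
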